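/- Let λ and μ be measures on a measurable space S. Suppose ν₁ and ν₂ are sigma-finite measures on S, and f₁, g₁, f₂, g₂ : S → ℝ are nonnegative measurable functions such that λ = ν₁.withDensity (fun x => ENNReal.ofReal (f₁ x)) = ν₂.withDensity (fun x => ENNReal.ofReal (f₂ x)) and μ = ν₁.withDensity (fun x => ENNReal.ofReal (g₁ x)) = ν₂.withDensity (fun x => ENNReal.ofReal (g₂ x)). Then ∫⁻ x, ENNReal.ofReal((Real.sqrt (f₁ x) − Real.sqrt (g₁ x))^2) ∂ν₁ = ∫⁻ x, ENNReal.ofReal((Real.sqrt (f₂ x) − Real.sqrt (g₂ x))^2) ∂ν₂. In other words, the squared Hellinger distance H²(λ,μ) = (1/2) ∫ (√f − √g)² dν does not depend on the choice of the densities nor the reference measure. -/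

import Mathlib

open MeasureTheory

/-- Key lemma: pulling the Hellinger integrand through a change of reference measure. -/
lemma hellinger_withDensity {S : Type*} [MeasurableSpace S] (ν : Measure S)
    (h f g : S → ℝ) (hh : Measurable h) (hf : Measurable f) (hg : Measurable g)
    (hh0 : ∀ x, 0 ≤ h x) :
    ∫⁻ x, ENNReal.ofReal ((Real.sqrt (f x) - Real.sqrt (g x)) ^ 2)
      ∂(ν.withDensity (fun x => ENNReal.ofReal (h x)))
    = ∫⁻ x, ENNReal.ofReal ((Real.sqrt (h x * f x) - Real.sqrt (h x * g x)) ^ 2) ∂ν := by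
  rw [lintegral_withDensity_eq_lintegral_mul₀ (hh.ennreal_ofReal.aemeasurable)
    (show AEMeasurable (fun x => ENNReal.ofReal ((Real.sqrt (f x) - Real.sqrt (g x)) ^ 2)) _ from
      ((hf.sqrt.sub hg.sqrt).pow_const 2).ennreal_ofReal.aemeasurable)]
  refine lintegral_congr fun x => ?_
  simp only [Pi.mul_apply]
  rw [← ENNReal.ofReal_mul (hh0 x)]
  congr 1
  rw [Real.sqrt_mul (hh0 x), Real.sqrt_mul (hh0 x), ← mul_sub, mul_pow,
    Real.sq_sqrt (hh0 x)]

theorem hellinger_well_defined {S : Type*} [MeasurableSpace S]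
    (lam mu ν₁ ν₂ : Measure S) [SigmaFinite ν₁] [SigmaFinite ν₂]
    (f₁ g₁ f₂ g₂ : S → ℝ)
    (hf₁ : Measurable f₁) (hg₁ : Measurable g₁)
    (hf₂ : Measurable f₂) (hg₂ : Measurable g₂)
    (hf₁0 : ∀ x, 0 ≤ f₁ x) (hg₁0 : ∀ x, 0 ≤ g₁ x)
    (hf₂0 : ∀ x, 0 ≤ f₂ x) (hg₂0 : ∀ x, 0 ≤ g₂ x)
    (hlam₁ : lam = ν₁.withDensity (fun x => ENNReal.ofReal (f₁ x)))
    (hlam₂ : lam = ν₂.withDensity (fun x => ENNReal.ofReal (f₂ x)))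
    (hmu₁ : mu = ν₁.withDensity (fun x => ENNReal.ofReal (g₁ x)))
    (hmu₂ : mu = ν₂.withDensity (fun x => ENNReal.ofReal (g₂ x))) :
    ∫⁻ x, ENNReal.ofReal ((Real.sqrt (f₁ x) - Real.sqrt (g₁ x)) ^ 2) ∂ν₁
    = ∫⁻ x, ENNReal.ofReal ((Real.sqrt (f₂ x) - Real.sqrt (g₂ x)) ^ 2) ∂ν₂ := by
  set ν : Measure S := ν₁ + ν₂ with hν
  have hac₁ : ν₁ ≪ ν := Measure.absolutelyContinuous_of_le (Measure.le_add_right le_rfl)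
  have hac₂ : ν₂ ≪ ν := Measure.absolutelyContinuous_of_le (Measure.le_add_left le_rfl)
  set h₁ : S → ℝ := fun x => (ν₁.rnDeriv ν x).toReal with hh₁def
  set h₂ : S → ℝ := fun x => (ν₂.rnDeriv ν x).toReal with hh₂def
  have hh₁ : Measurable h₁ := (Measure.measurable_rnDeriv _ _).ennreal_toReal
  have hh₂ : Measurable h₂ := (Measure.measurable_rnDeriv _ _).ennreal_toReal
  have hh₁0 : ∀ x, 0 ≤ h₁ x := fun x => ENNReal.toReal_nonneg
  have hh₂0 : ∀ x, 0 ≤ h₂ x := fun x => ENNReal.toReal_nonneg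
  have hwd₁ : ν.withDensity (fun x => ENNReal.ofReal (h₁ x)) = ν₁ := by
    have hae : (fun x => ENNReal.ofReal (h₁ x)) =ᵐ[ν] ν₁.rnDeriv ν :=
      (Measure.rnDeriv_lt_top ν₁ ν).mono fun x hx => by
        simp [hh₁def, ENNReal.ofReal_toReal hx.ne]
    rw [withDensity_congr_ae hae]
    exact Measure.withDensity_rnDeriv_eq _ _ hac₁
  have hwd₂ : ν.withDensity (fun x => ENNReal.ofReal (h₂ x)) = ν₂ := by
    have hae : (fun x => ENNReal.ofReal (h₂ x)) =ᵐ[ν] ν₂.rnDeriv ν :=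
      (Measure.rnDeriv_lt_top ν₂ ν).mono fun x hx => by
        simp [hh₂def, ENNReal.ofReal_toReal hx.ne]
    rw [withDensity_congr_ae hae]
    exact Measure.withDensity_rnDeriv_eq _ _ hac₂
  -- densities of lam and mu w.r.t. ν
  have comp : ∀ (h f : S → ℝ), Measurable h → Measurable f → (∀ x, 0 ≤ h x) →
      (ν.withDensity (fun x => ENNReal.ofReal (h x))).withDensity
        (fun x => ENNReal.ofReal (f x))
      = ν.withDensity (fun x => ENNReal.ofReal (h x * f x)) := by
    intro h f hh hf hh0
    rw [← withDensity_mul _ hh.ennreal_ofReal hf.ennreal_ofReal]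
    exact withDensity_congr_ae (Filter.Eventually.of_forall fun x => by
      simp [ENNReal.ofReal_mul (hh0 x)])
  have hlamν : ν.withDensity (fun x => ENNReal.ofReal (h₁ x * f₁ x))
      = ν.withDensity (fun x => ENNReal.ofReal (h₂ x * f₂ x)) := by
    rw [← comp h₁ f₁ hh₁ hf₁ hh₁0, ← comp h₂ f₂ hh₂ hf₂ hh₂0, hwd₁, hwd₂, ← hlam₁, ← hlam₂]
  have hmuν : ν.withDensity (fun x => ENNReal.ofReal (h₁ x * g₁ x))
      = ν.withDensity (fun x => ENNReal.ofReal (h₂ x * g₂ x)) := by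
    rw [← comp h₁ g₁ hh₁ hg₁ hh₁0, ← comp h₂ g₂ hh₂ hg₂ hh₂0, hwd₁, hwd₂, ← hmu₁, ← hmu₂]
  have haef : (fun x => h₁ x * f₁ x) =ᵐ[ν] fun x => h₂ x * f₂ x := by
    have := (withDensity_eq_iff_of_sigmaFinite
      (hh₁.mul hf₁).ennreal_ofReal.aemeasurable
      (hh₂.mul hf₂).ennreal_ofReal.aemeasurable).mp hlamν
    exact this.mono fun x hx => by
      simp only [Pi.mul_apply] at hx
      rwa [ENNReal.ofReal_eq_ofReal_iff (mul_nonneg (hh₁0 x) (hf₁0 x))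
        (mul_nonneg (hh₂0 x) (hf₂0 x))] at hx
  have haeg : (fun x => h₁ x * g₁ x) =ᵐ[ν] fun x => h₂ x * g₂ x := by
    have := (withDensity_eq_iff_of_sigmaFinite
      (hh₁.mul hg₁).ennreal_ofReal.aemeasurable
      (hh₂.mul hg₂).ennreal_ofReal.aemeasurable).mp hmuν
    exact this.mono fun x hx => by
      simp only [Pi.mul_apply] at hx
      rwa [ENNReal.ofReal_eq_ofReal_iff (mul_nonneg (hh₁0 x) (hg₁0 x))
        (mul_nonneg (hh₂0 x) (hg₂0 x))] at hx
  calc ∫⁻ x, ENNReal.ofReal ((Real.sqrt (f₁ x) - Real.sqrt (g₁ x)) ^ 2) ∂ν₁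
      = ∫⁻ x, ENNReal.ofReal ((Real.sqrt (h₁ x * f₁ x) - Real.sqrt (h₁ x * g₁ x)) ^ 2) ∂ν := by
        rw [← hwd₁, hellinger_withDensity ν h₁ f₁ g₁ hh₁ hf₁ hg₁ hh₁0]
    _ = ∫⁻ x, ENNReal.ofReal ((Real.sqrt (h₂ x * f₂ x) - Real.sqrt (h₂ x * g₂ x)) ^ 2) ∂ν := by
        refine lintegral_congr_ae ?_
        filter_upwards [haef, haeg] with x hx hy
        rw [hx, hy]
    _ = ∫⁻ x, ENNReal.ofReal ((Real.sqrt (f₂ x) - Real.sqrt (g₂ x)) ^ 2) ∂ν₂ := by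
        rw [← hwd₂, hellinger_withDensity ν h₂ f₂ g₂ hh₂ hf₂ hg₂ hh₂0]
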